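/- Let P = (P_{ij})_{i,j∈{0,1,2,3}} be a matrix with nonnegative entries whose rows each sum to 1, with P_{01}·P_{02}·P_{03} > 0 and such that every row has at least one positive entry, and let k ≥ 1 be an integer. Let θ = sup over h ∈ ℝ³ of max_{i,j∈{1,2,3}} |∂F_i/∂h_j(h)| (which is finite under these assumptions). If 3kθ < 1, then any bounded function h : T_k → ℝ³ on the infinite k-ary rooted tree satisfying h(x) = Σ_{y∈S(x)} F(h(y)) for every vertex x (where S(x) is the set of the k direct successors of x) is identically equal to (0,0,0). -/

import Mathlib

open Real Filter

/-- For `i = 1,2,3` (indexed by `i : Fin 3`, corresponding to row `i.succ` of `P`),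
`F i h = log((P_{i0} + P_{i1} e^{h₁} + P_{i2} e^{h₂} + P_{i3} e^{h₃}) /
           (P_{00} + P_{01} e^{h₁} + P_{02} e^{h₂} + P_{03} e^{h₃}))`. -/
noncomputable def F (P : Fin 4 → Fin 4 → ℝ) (i : Fin 3) (h : Fin 3 → ℝ) : ℝ :=
  Real.log ((P i.succ 0 + P i.succ 1 * Real.exp (h 0) + P i.succ 2 * Real.exp (h 1) +
      P i.succ 3 * Real.exp (h 2)) /
    (P 0 0 + P 0 1 * Real.exp (h 0) + P 0 2 * Real.exp (h 1) + P 0 3 * Real.exp (h 2)))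

/-- The partial derivative `∂F_i/∂h_j` at the point `h`. -/
noncomputable def pd (P : Fin 4 → Fin 4 → ℝ) (i j : Fin 3) (h : Fin 3 → ℝ) : ℝ :=
  deriv (fun t => F P i (Function.update h j t)) (h j)

/-- If `3kθ < 1`, where `θ` is the supremum over `h ∈ ℝ³` of `max_{i,j} |∂F_i/∂h_j(h)|`,
then any bounded solution of the recursion `h(x) = ∑_{y ∈ S(x)} F(h(y))` on the infinite
`k`-ary rooted tree is identically `(0,0,0)`. -/
noncomputable def Nf (P : Fin 4 → Fin 4 → ℝ) (r : Fin 4) (v : Fin 3 → ℝ) : ℝ :=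
  P r 0 + P r 1 * Real.exp (v 0) + P r 2 * Real.exp (v 1) + P r 3 * Real.exp (v 2)

lemma Nf_pos (P : Fin 4 → Fin 4 → ℝ) (hPnonneg : ∀ i j, 0 ≤ P i j)
    (hProwpos : ∀ i, ∃ j, 0 < P i j) (r : Fin 4) (v : Fin 3 → ℝ) : 0 < Nf P r v := by
  obtain ⟨j, hj⟩ := hProwpos r
  have e0 := Real.exp_pos (v 0)
  have e1 := Real.exp_pos (v 1)
  have e2 := Real.exp_pos (v 2)
  have h0 := hPnonneg r 0
  have h1 := hPnonneg r 1
  have h2 := hPnonneg r 2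
  have h3 := hPnonneg r 3
  unfold Nf
  fin_cases j <;>
    first
    | nlinarith [show (0:ℝ) < P r 0 from hj]
    | nlinarith [show (0:ℝ) < P r 1 from hj]
    | nlinarith [show (0:ℝ) < P r 2 from hj]
    | nlinarith [show (0:ℝ) < P r 3 from hj]

lemma F_eq (P : Fin 4 → Fin 4 → ℝ) (hPnonneg : ∀ i j, 0 ≤ P i j)
    (hProwpos : ∀ i, ∃ j, 0 < P i j) (i : Fin 3) (v : Fin 3 → ℝ) :
    F P i v = Real.log (Nf P i.succ v) - Real.log (Nf P 0 v) := by
  rw [show F P i v = Real.log (Nf P i.succ v / Nf P 0 v) from rfl]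
  exact Real.log_div (Nf_pos P hPnonneg hProwpos _ v).ne' (Nf_pos P hPnonneg hProwpos _ v).ne'

lemma Nf_update (P : Fin 4 → Fin 4 → ℝ) (r : Fin 4) (j : Fin 3) (v : Fin 3 → ℝ) (t : ℝ) :
    Nf P r (Function.update v j t) =
      (Nf P r v - P r j.succ * Real.exp (v j)) + P r j.succ * Real.exp t := by
  fin_cases j <;>
    simp [Nf, Function.update, show (Fin.succ 0 : Fin 4) = 1 from rfl,
      show (Fin.succ 1 : Fin 4) = 2 from rfl, show (Fin.succ 2 : Fin 4) = 3 from rfl] <;> ring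

lemma hasDerivAt_partial (P : Fin 4 → Fin 4 → ℝ) (hPnonneg : ∀ i j, 0 ≤ P i j)
    (hProwpos : ∀ i, ∃ j, 0 < P i j) (i j : Fin 3) (v : Fin 3 → ℝ) (t : ℝ) :
    HasDerivAt (fun s => F P i (Function.update v j s))
      (P i.succ j.succ * Real.exp t / Nf P i.succ (Function.update v j t)
        - P 0 j.succ * Real.exp t / Nf P 0 (Function.update v j t)) t := by
  have key : ∀ r : Fin 4, HasDerivAt (fun s => Nf P r (Function.update v j s))
      (P r j.succ * Real.exp t) t := by
    intro r
    have heq : (fun s => Nf P r (Function.update v j s)) =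
        fun s => (Nf P r v - P r j.succ * Real.exp (v j)) + P r j.succ * Real.exp s :=
      funext (Nf_update P r j v)
    rw [heq]
    exact ((Real.hasDerivAt_exp t).const_mul (P r j.succ)).const_add _
  have hne : ∀ (r : Fin 4) (s : ℝ), Nf P r (Function.update v j s) ≠ 0 :=
    fun r s => (Nf_pos P hPnonneg hProwpos r _).ne'
  have d := ((key i.succ).log (hne i.succ t)).sub ((key 0).log (hne 0 t))
  have hFeq : (fun s => F P i (Function.update v j s)) =
      fun s => Real.log (Nf P i.succ (Function.update v j s)) -
        Real.log (Nf P 0 (Function.update v j s)) :=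
    funext fun s => F_eq P hPnonneg hProwpos i _
  rw [hFeq]
  exact d

lemma pd_eq (P : Fin 4 → Fin 4 → ℝ) (hPnonneg : ∀ i j, 0 ≤ P i j)
    (hProwpos : ∀ i, ∃ j, 0 < P i j) (i j : Fin 3) (v : Fin 3 → ℝ) :
    pd P i j v = P i.succ j.succ * Real.exp (v j) / Nf P i.succ v
      - P 0 j.succ * Real.exp (v j) / Nf P 0 v := by
  have h := hasDerivAt_partial P hPnonneg hProwpos i j v (v j)
  rw [Function.update_eq_self] at h
  exact h.deriv

lemma term_le (P : Fin 4 → Fin 4 → ℝ) (hPnonneg : ∀ i j, 0 ≤ P i j) (r : Fin 4) (j : Fin 3)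
    (v : Fin 3 → ℝ) : P r j.succ * Real.exp (v j) ≤ Nf P r v := by
  have e0 := Real.exp_pos (v 0)
  have e1 := Real.exp_pos (v 1)
  have e2 := Real.exp_pos (v 2)
  have h0 := hPnonneg r 0
  have h1 := hPnonneg r 1
  have h2 := hPnonneg r 2
  have h3 := hPnonneg r 3
  unfold Nf
  fin_cases j
  · show P r 1 * Real.exp (v 0) ≤ _; nlinarith
  · show P r 2 * Real.exp (v 1) ≤ _; nlinarith
  · show P r 3 * Real.exp (v 2) ≤ _; nlinarith

lemma pd_abs_le_one (P : Fin 4 → Fin 4 → ℝ) (hPnonneg : ∀ i j, 0 ≤ P i j)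
    (hProwpos : ∀ i, ∃ j, 0 < P i j) (i j : Fin 3) (v : Fin 3 → ℝ) : |pd P i j v| ≤ 1 := by
  rw [pd_eq P hPnonneg hProwpos]
  have hN := Nf_pos P hPnonneg hProwpos i.succ v
  have hD := Nf_pos P hPnonneg hProwpos 0 v
  have h1 : P i.succ j.succ * Real.exp (v j) / Nf P i.succ v ≤ 1 :=
    (div_le_one hN).2 (term_le P hPnonneg i.succ j v)
  have h2 : P 0 j.succ * Real.exp (v j) / Nf P 0 v ≤ 1 :=
    (div_le_one hD).2 (term_le P hPnonneg 0 j v)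
  have h3 : 0 ≤ P i.succ j.succ * Real.exp (v j) / Nf P i.succ v :=
    div_nonneg (mul_nonneg (hPnonneg _ _) (Real.exp_pos _).le) hN.le
  have h4 : 0 ≤ P 0 j.succ * Real.exp (v j) / Nf P 0 v :=
    div_nonneg (mul_nonneg (hPnonneg _ _) (Real.exp_pos _).le) hD.le
  rw [abs_le]
  constructor <;> linarith

lemma hasDerivAt_seg (P : Fin 4 → Fin 4 → ℝ) (hPnonneg : ∀ i j, 0 ≤ P i j)
    (hProwpos : ∀ i, ∃ j, 0 < P i j) (i : Fin 3) (h : Fin 3 → ℝ) (t : ℝ) :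
    HasDerivAt (fun s => F P i (s • h))
      (pd P i 0 (t • h) * h 0 + pd P i 1 (t • h) * h 1 + pd P i 2 (t • h) * h 2) t := by
  have key : ∀ r : Fin 4, HasDerivAt (fun s => Nf P r (s • h))
      (P r 1 * (h 0 * Real.exp (t * h 0)) + P r 2 * (h 1 * Real.exp (t * h 1)) +
        P r 3 * (h 2 * Real.exp (t * h 2))) t := by
    intro r
    have heq : (fun s => Nf P r (s • h)) = fun s => P r 0 + (P r 1 * Real.exp (s * h 0) +
        P r 2 * Real.exp (s * h 1) + P r 3 * Real.exp (s * h 2)) := by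
      funext s
      simp only [Nf, Pi.smul_apply, smul_eq_mul]
      ring
    rw [heq]
    have e : ∀ c : ℝ, HasDerivAt (fun s : ℝ => Real.exp (s * c)) (c * Real.exp (t * c)) t := by
      intro c
      simpa [mul_comm] using (hasDerivAt_mul_const (x := t) c).exp
    exact ((((e (h 0)).const_mul (P r 1)).add ((e (h 1)).const_mul (P r 2))).add
      ((e (h 2)).const_mul (P r 3))).const_add (P r 0)
  have hne : ∀ (r : Fin 4) (s : ℝ), Nf P r (s • h) ≠ 0 :=
    fun r s => (Nf_pos P hPnonneg hProwpos r _).ne'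
  have d := ((key i.succ).log (hne i.succ t)).sub ((key 0).log (hne 0 t))
  have hFeq : (fun s : ℝ => F P i (s • h)) =
      fun s : ℝ => Real.log (Nf P i.succ (s • h)) - Real.log (Nf P 0 (s • h)) :=
    funext fun s => F_eq P hPnonneg hProwpos i _
  rw [hFeq]
  refine d.congr_deriv ?_
  rw [pd_eq P hPnonneg hProwpos i 0, pd_eq P hPnonneg hProwpos i 1, pd_eq P hPnonneg hProwpos i 2]
  simp only [Pi.smul_apply, smul_eq_mul, show (Fin.succ 0 : Fin 4) = 1 from rfl,
    show (Fin.succ 1 : Fin 4) = 2 from rfl, show (Fin.succ 2 : Fin 4) = 3 from rfl]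
  ring

lemma F_zero (P : Fin 4 → Fin 4 → ℝ) (hPnonneg : ∀ i j, 0 ≤ P i j)
    (hProw : ∀ i, ∑ j, P i j = 1) (hProwpos : ∀ i, ∃ j, 0 < P i j) (i : Fin 3) :
    F P i (0 : Fin 3 → ℝ) = 0 := by
  have hN : ∀ r : Fin 4, Nf P r (0 : Fin 3 → ℝ) = 1 := by
    intro r
    have := hProw r
    rw [Fin.sum_univ_four] at this
    simp only [Nf, Pi.zero_apply, Real.exp_zero, mul_one]
    linarith
  rw [F_eq P hPnonneg hProwpos, hN, hN, Real.log_one, sub_zero]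

lemma pd_le_theta (P : Fin 4 → Fin 4 → ℝ) (hPnonneg : ∀ i j, 0 ≤ P i j)
    (hProwpos : ∀ i, ∃ j, 0 < P i j) (θ : ℝ)
    (hθ : θ = ⨆ h : Fin 3 → ℝ, ⨆ i : Fin 3, ⨆ j : Fin 3, |pd P i j h|)
    (i j : Fin 3) (v : Fin 3 → ℝ) : |pd P i j v| ≤ θ := by
  have hb1 : ∀ w : Fin 3 → ℝ, (⨆ i : Fin 3, ⨆ j : Fin 3, |pd P i j w|) ≤ 1 := fun w =>
    ciSup_le fun i => ciSup_le fun j => pd_abs_le_one P hPnonneg hProwpos i j w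
  have step1 : |pd P i j v| ≤ ⨆ j' : Fin 3, |pd P i j' v| :=
    le_ciSup (f := fun j' : Fin 3 => |pd P i j' v|)
      (Set.Finite.bddAbove (Set.finite_range _)) j
  have step2 : (⨆ j' : Fin 3, |pd P i j' v|) ≤ ⨆ i' : Fin 3, ⨆ j' : Fin 3, |pd P i' j' v| :=
    le_ciSup (f := fun i' : Fin 3 => ⨆ j' : Fin 3, |pd P i' j' v|)
      (Set.Finite.bddAbove (Set.finite_range _)) i
  have step3 : (⨆ i' : Fin 3, ⨆ j' : Fin 3, |pd P i' j' v|) ≤ θ := by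
    rw [hθ]
    exact le_ciSup (f := fun w : Fin 3 → ℝ => ⨆ i' : Fin 3, ⨆ j' : Fin 3, |pd P i' j' w|)
      ⟨1, by rintro _ ⟨w, rfl⟩; exact hb1 w⟩ v
  linarith

lemma F_bound (P : Fin 4 → Fin 4 → ℝ) (hPnonneg : ∀ i j, 0 ≤ P i j)
    (hProw : ∀ i, ∑ j, P i j = 1) (hProwpos : ∀ i, ∃ j, 0 < P i j) (θ : ℝ)
    (hθ : θ = ⨆ h : Fin 3 → ℝ, ⨆ i : Fin 3, ⨆ j : Fin 3, |pd P i j h|)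
    (i : Fin 3) (h : Fin 3 → ℝ) (M : ℝ) (hM : ∀ j, |h j| ≤ M) :
    |F P i h| ≤ 3 * θ * M := by
  have hθ0 : 0 ≤ θ :=
    le_trans (abs_nonneg _) (pd_le_theta P hPnonneg hProwpos θ hθ 0 0 0)
  have hd : ∀ t ∈ Set.Icc (0:ℝ) 1, HasDerivWithinAt (fun s => F P i (s • h))
      (pd P i 0 (t • h) * h 0 + pd P i 1 (t • h) * h 1 + pd P i 2 (t • h) * h 2)
      (Set.Icc (0:ℝ) 1) t :=
    fun t _ => (hasDerivAt_seg P hPnonneg hProwpos i h t).hasDerivWithinAt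
  have bound : ∀ t ∈ Set.Ico (0:ℝ) 1,
      ‖pd P i 0 (t • h) * h 0 + pd P i 1 (t • h) * h 1 + pd P i 2 (t • h) * h 2‖ ≤
        3 * θ * M := by
    intro t _
    rw [Real.norm_eq_abs]
    have hterm : ∀ j : Fin 3, |pd P i j (t • h) * h j| ≤ θ * M := by
      intro j
      rw [abs_mul]
      exact mul_le_mul (pd_le_theta P hPnonneg hProwpos θ hθ i j _) (hM j) (abs_nonneg _) hθ0
    calc |pd P i 0 (t • h) * h 0 + pd P i 1 (t • h) * h 1 + pd P i 2 (t • h) * h 2|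
        ≤ |pd P i 0 (t • h) * h 0 + pd P i 1 (t • h) * h 1| + |pd P i 2 (t • h) * h 2| :=
          abs_add_le _ _
      _ ≤ |pd P i 0 (t • h) * h 0| + |pd P i 1 (t • h) * h 1| + |pd P i 2 (t • h) * h 2| := by
          have := abs_add_le (pd P i 0 (t • h) * h 0) (pd P i 1 (t • h) * h 1); linarith
      _ ≤ 3 * θ * M := by have := hterm 0; have := hterm 1; have := hterm 2; linarith
  have key := norm_image_sub_le_of_norm_deriv_le_segment_01' hd bound
  rw [one_smul, zero_smul, F_zero P hPnonneg hProw hProwpos i, sub_zero,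
    Real.norm_eq_abs] at key
  exact key

theorem stmt0 (P : Fin 4 → Fin 4 → ℝ) (k : ℕ) (hk : 1 ≤ k)
    (hPnonneg : ∀ i j, 0 ≤ P i j) (hProw : ∀ i, ∑ j, P i j = 1)
    (hPpos : 0 < P 0 1 * P 0 2 * P 0 3) (hProwpos : ∀ i, ∃ j, 0 < P i j)
    (θ : ℝ) (hθ : θ = ⨆ h : Fin 3 → ℝ, ⨆ i : Fin 3, ⨆ j : Fin 3, |pd P i j h|)
    (hcontr : 3 * k * θ < 1)
    (hfun : List (Fin k) → Fin 3 → ℝ)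
    (hbd : ∃ C : ℝ, ∀ x i, |hfun x i| ≤ C)
    (hrec : ∀ (x : List (Fin k)) (i : Fin 3),
      hfun x i = ∑ a : Fin k, F P i (hfun (x ++ [a]))) :
    ∀ x i, hfun x i = 0 := by
  obtain ⟨C, hC⟩ := hbd
  set Q : (List (Fin k) × Fin 3) → ℝ := fun p => |hfun p.1 p.2| with hQ
  have hbdd : BddAbove (Set.range Q) := ⟨C, by rintro _ ⟨p, rfl⟩; exact hC p.1 p.2⟩
  set M := ⨆ p, Q p with hMdef
  have hMge : ∀ x i, |hfun x i| ≤ M := fun x i => le_ciSup hbdd (x, i)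
  have hM0 : 0 ≤ M := le_trans (abs_nonneg _) (hMge [] 0)
  have hθ0 : 0 ≤ θ :=
    le_trans (abs_nonneg _) (pd_le_theta P hPnonneg hProwpos θ hθ 0 0 0)
  have key : ∀ (x : List (Fin k)) (i : Fin 3), |hfun x i| ≤ (k : ℝ) * (3 * θ * M) := by
    intro x i
    rw [hrec x i]
    calc |∑ a : Fin k, F P i (hfun (x ++ [a]))|
        ≤ ∑ a : Fin k, |F P i (hfun (x ++ [a]))| := Finset.abs_sum_le_sum_abs _ _
      _ ≤ ∑ _a : Fin k, 3 * θ * M := Finset.sum_le_sum fun a _ =>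
          F_bound P hPnonneg hProw hProwpos θ hθ i _ M (fun j => hMge _ j)
      _ = (k : ℝ) * (3 * θ * M) := by
          rw [Finset.sum_const, Finset.card_univ, Fintype.card_fin, nsmul_eq_mul]
  have hMle : M ≤ (k : ℝ) * (3 * θ * M) := ciSup_le fun p => key p.1 p.2
  have hMzero : M = 0 := by nlinarith
  intro x i
  have := hMge x i
  rw [hMzero] at this
  exact abs_nonpos_iff.1 this
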